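/- Under the abstract setting: let (u, p, φ, r, y) solve the continuous optimality system and (u_h, p_h, φ_h, r_h, y_h) the discrete one, and let (P_h u, R_h p), (P̄_h φ, R̄_h r) be the elliptic projections. Then for all z_h ∈ X_h and w_h ∈ M_h: a_h(P_h u − u_h, z_h) + b_h(z_h, R_h p − p_h) = ⟨y − y_h, E_h z_h⟩_Q, b_h(P_h u − u_h, w_h) = 0, a_h(z_h, P̄_h φ − φ_h) + b_h(z_h, r_h − R̄_h r) = ⟨u − u_h, z_h⟩_W, and b_h(P̄_h φ − φ_h, w_h) = 0. Consequently ⟨y − y_h, E_h(P̄_h φ − φ_h)⟩_Q = ⟨u − u_h, P_h u − u_h⟩_W. -/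
import Mathlib

open RealInnerProductSpace

/-- Error equations (2.9)–(2.12) and the resulting duality identity:
subtracting the discrete optimality system from the elliptic-projection system. -/
theorem stmt8 {Xh Mh W Q : Type*}
    [AddCommGroup Xh] [Module ℝ Xh] [AddCommGroup Mh] [Module ℝ Mh]
    [NormedAddCommGroup W] [InnerProductSpace ℝ W]
    [NormedAddCommGroup Q] [InnerProductSpace ℝ Q]
    (ah : Xh →ₗ[ℝ] Xh →ₗ[ℝ] ℝ) (bh : Xh →ₗ[ℝ] Mh →ₗ[ℝ] ℝ)
    (Eh : Xh →ₗ[ℝ] Q) (ι : Xh →ₗ[ℝ] W)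
    (uh φh Phu Pφ : Xh) (ph rh Rp Rr : Mh)
    (f ud uW : W) (y yh : Q)
    -- elliptic projection system (2.6)
    (hp1 : ∀ zh : Xh, ah Phu zh + bh zh Rp = ⟪y, Eh zh⟫ + ⟪f, ι zh⟫)
    (hp2 : ∀ wh : Mh, bh Phu wh = 0)
    (hp3 : ∀ zh : Xh, ah zh Pφ - bh zh Rr = ⟪uW - ud, ι zh⟫)
    (hp4 : ∀ wh : Mh, bh Pφ wh = 0)
    -- discrete optimality system (2.5)
    (hd1 : ∀ zh : Xh, ah uh zh + bh zh ph = ⟪yh, Eh zh⟫ + ⟪f, ι zh⟫)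
    (hd2 : ∀ wh : Mh, bh uh wh = 0)
    (hd3 : ∀ zh : Xh, ah zh φh - bh zh rh = ⟪ι uh - ud, ι zh⟫)
    (hd4 : ∀ wh : Mh, bh φh wh = 0) :
    (∀ zh : Xh, ah (Phu - uh) zh + bh zh (Rp - ph) = ⟪y - yh, Eh zh⟫) ∧
    (∀ wh : Mh, bh (Phu - uh) wh = 0) ∧
    (∀ zh : Xh, ah zh (Pφ - φh) + bh zh (rh - Rr) = ⟪uW - ι uh, ι zh⟫) ∧
    (∀ wh : Mh, bh (Pφ - φh) wh = 0) ∧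
    ⟪y - yh, Eh (Pφ - φh)⟫ = ⟪uW - ι uh, ι (Phu - uh)⟫ := by
  have e1 : ∀ zh : Xh, ah (Phu - uh) zh + bh zh (Rp - ph) = ⟪y - yh, Eh zh⟫ := by
    intro zh
    have h1 := hp1 zh; have h2 := hd1 zh
    simp only [map_sub, LinearMap.sub_apply, inner_sub_left]
    linarith
  have e2 : ∀ wh : Mh, bh (Phu - uh) wh = 0 := by
    intro wh
    simp only [map_sub, LinearMap.sub_apply, hp2 wh, hd2 wh, sub_zero]
  have e3 : ∀ zh : Xh, ah zh (Pφ - φh) + bh zh (rh - Rr) = ⟪uW - ι uh, ι zh⟫ := by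
    intro zh
    have h1 := hp3 zh; have h2 := hd3 zh
    simp only [map_sub, inner_sub_left] at *
    linarith
  have e4 : ∀ wh : Mh, bh (Pφ - φh) wh = 0 := by
    intro wh
    simp only [map_sub, LinearMap.sub_apply, hp4 wh, hd4 wh, sub_zero]
  refine ⟨e1, e2, e3, e4, ?_⟩
  have h1 := e1 (Pφ - φh)
  have h2 := e3 (Phu - uh)
  rw [e4 (Rp - ph), add_zero] at h1
  have hb : bh (Phu - uh) (rh - Rr) = 0 := by
    rw [map_sub, e2, e2, sub_zero]
  rw [hb, add_zero] at h2
  rw [← h1, ← h2]
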